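/- Let (W,S) be a Coxeter system, τ, φ ∈ W, and W₁, W₂ standard parabolic subgroups of W. Let s ∈ S be such that sφ < φ in the Bruhat order and brmin(sτW₁) ≤ brmin(τW₁). Then the unique minimal element of W₁ I(τ⁻¹) φ W₂ = { a x φ b : a ∈ W₁, x ≤ τ⁻¹, b ∈ W₂ } equals the unique minimal element of W₁ I(τ⁻¹) sφ W₂ = { a x (sφ) b : a ∈ W₁, x ≤ τ⁻¹, b ∈ W₂ }. (Both minimal elements exist.) -/

import Mathlib

variable {B W : Type*} [Group W] {M : CoxeterMatrix B}

/-- The (strong) Bruhat order on the Coxeter group `W`: `u ≤ v` if and only if some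
reduced word for `v` admits a sublist whose product is `u`. -/
def BruhatLE (cs : CoxeterSystem M W) (u v : W) : Prop :=
  ∃ ω : List B, cs.IsReduced ω ∧ cs.wordProd ω = v ∧
    ∃ ω' : List B, ω'.Sublist ω ∧ cs.wordProd ω' = u

/-- The strict Bruhat order. -/
def BruhatLT (cs : CoxeterSystem M W) (u v : W) : Prop :=
  BruhatLE cs u v ∧ u ≠ v

/-- `m` is the unique minimal element of `K` in the Bruhat order, i.e. `m ∈ K` and
`m` is Bruhat-below every element of `K`. -/
def IsBrMin (cs : CoxeterSystem M W) (K : Set W) (m : W) : Prop :=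
  m ∈ K ∧ ∀ x ∈ K, BruhatLE cs m x

/-- `m` is the unique maximal element of `K` in the Bruhat order, i.e. `m ∈ K` and
`m` is Bruhat-above every element of `K`. -/
def IsBrMax (cs : CoxeterSystem M W) (K : Set W) (m : W) : Prop :=
  m ∈ K ∧ ∀ x ∈ K, BruhatLE cs x m

/-- A standard parabolic subgroup: a subgroup generated by a subset of the simple
reflections. -/
def IsStdParabolic (cs : CoxeterSystem M W) (P : Subgroup W) : Prop :=
  ∃ X : Set B, P = Subgroup.closure (cs.simple '' X)

/-- The left coset `u•W₁ = {u * b : b ∈ W₁}`. -/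
def lCoset (W₁ : Subgroup W) (u : W) : Set W := {x | ∃ b ∈ W₁, x = u * b}

/-- The double coset `W₁ u W₂ = {a * u * b : a ∈ W₁, b ∈ W₂}`. -/
def dblCoset (W₁ W₂ : Subgroup W) (u : W) : Set W :=
  {x | ∃ a ∈ W₁, ∃ b ∈ W₂, x = a * u * b}

/-- The set `W₁ I(τ⁻¹) φ W₂ = { a x φ b : a ∈ W₁, x ≤ τ⁻¹, b ∈ W₂ }`. -/
def KKset (cs : CoxeterSystem M W) (W₁ W₂ : Subgroup W) (τ φ : W) : Set W :=
  {z | ∃ a ∈ W₁, ∃ x, BruhatLE cs x τ⁻¹ ∧ ∃ b ∈ W₂, z = a * x * φ * b}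


section
set_option linter.unusedSectionVars false

variable {B W : Type*} [Group W] {M : CoxeterMatrix B}

namespace BrAux
open CoxeterSystem List

variable (cs : CoxeterSystem M W)

local prefix:100 "σ" => cs.simple
local prefix:100 "π" => cs.wordProd
local prefix:100 "ℓ" => cs.length

noncomputable local instance : DecidableEq W := Classical.decEq W

/-- counting (mod 2) occurrences of `t` in a list -/
noncomputable def cnt (L : List W) (t : W) : ZMod 2 :=
  (L.map (fun x => if x = t then (1 : ZMod 2) else 0)).sum

@[simp] lemma cnt_nil (t : W) : cnt [] t = 0 := rfl

@[simp] lemma cnt_cons (x : W) (L : List W) (t : W) :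
    cnt (x :: L) t = (if x = t then (1:ZMod 2) else 0) + cnt L t := by
  simp [cnt]

lemma mem_of_cnt_ne_zero {L : List W} {t : W} (h : cnt L t ≠ 0) : t ∈ L := by
  induction L with
  | nil => simp at h
  | cons x L ih =>
    rcases eq_or_ne x t with rfl | hne
    · exact mem_cons_self
    · simp only [cnt_cons, if_neg hne, zero_add] at h
      exact mem_cons_of_mem _ (ih h)

/-- The building block of the reflection representation on `W × ZMod 2`. -/
noncomputable def eta (i : B) : Function.End (W × ZMod 2) :=
  fun p => (σ i * p.1 * σ i, p.2 + if p.1 = σ i then 1 else 0)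

lemma eta_eta (i j : B) (p : W × ZMod 2) :
    (eta cs i * eta cs j) p
      = ((σ i * σ j) * p.1 * (σ i * σ j)⁻¹,
          p.2 + ((if p.1 = σ j then (1:ZMod 2) else 0)
            + if p.1 = σ j * σ i * σ j then 1 else 0)) := by
  show eta cs i (eta cs j p) = _
  simp only [eta, mul_inv_rev, cs.inv_simple]
  have h1 : (σ j * p.1 * σ j = σ i) ↔ (p.1 = σ j * σ i * σ j) := by
    constructor
    · intro h
      rw [← h]
      simp [mul_assoc, cs.simple_mul_simple_cancel_left, cs.simple_mul_simple_cancel_right]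
    · intro h
      rw [h]
      simp [mul_assoc, cs.simple_mul_simple_cancel_left, cs.simple_mul_simple_self]
  refine Prod.ext (by group) ?_
  simp only [h1]
  ring

lemma eta_eta_pow (i j : B) (k : ℕ) (p : W × ZMod 2) :
    ((eta cs i * eta cs j) ^ k) p
      = ((σ i * σ j) ^ k * p.1 * ((σ i * σ j) ^ k)⁻¹,
          p.2 + ∑ l ∈ Finset.range k,
            ((if (σ i * σ j) ^ l * p.1 * ((σ i * σ j) ^ l)⁻¹ = σ j then (1:ZMod 2) else 0)
              + if (σ i * σ j) ^ l * p.1 * ((σ i * σ j) ^ l)⁻¹ = σ j * σ i * σ j then 1 else 0)) := by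
  induction k generalizing p with
  | zero => simp; rfl
  | succ k ih =>
    have hstep : ((eta cs i * eta cs j) ^ (k+1)) p
        = ((eta cs i * eta cs j) ^ k) ((eta cs i * eta cs j) p) := by
      rw [pow_succ]; rfl
    rw [hstep, eta_eta cs i j p, ih]
    refine Prod.ext ?_ ?_
    · simp only
      simp [pow_succ, mul_inv_rev, mul_assoc]
    · simp only
      rw [Finset.sum_range_succ']
      have h0 : ∀ l : ℕ, (σ i * σ j) ^ l * ((σ i * σ j) * p.1 * (σ i * σ j)⁻¹) * ((σ i * σ j) ^ l)⁻¹
          = (σ i * σ j) ^ (l+1) * p.1 * ((σ i * σ j) ^ (l+1))⁻¹ := by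
        intro l; simp [pow_succ, mul_inv_rev, mul_assoc]
      simp only [h0, pow_zero, one_mul, inv_one, mul_one]
      ring

end BrAux
end

section
set_option linter.unusedSectionVars false
variable {B W : Type*} [Group W] {M : CoxeterMatrix B}
namespace BrAux
open CoxeterSystem List
variable (cs : CoxeterSystem M W)
local prefix:100 "σ" => cs.simple
local prefix:100 "π" => cs.wordProd
local prefix:100 "ℓ" => cs.length
noncomputable local instance : DecidableEq W := Classical.decEq W

lemma pair_sum (f : ℕ → ZMod 2) (m : ℕ) :
    ∑ l ∈ Finset.range m, (f (2*l) + f (2*l+1)) = ∑ n ∈ Finset.range (2*m), f n := by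
  induction m with
  | zero => simp
  | succ m ih =>
    rw [Finset.sum_range_succ, ih, Nat.mul_succ, show 2*m+2 = (2*m+1)+1 from rfl,
      Finset.sum_range_succ, Finset.sum_range_succ, add_assoc]

lemma periodic_sum_zero (f : ℕ → ZMod 2) (m : ℕ) (hf : ∀ n, f (n + m) = f n) :
    ∑ n ∈ Finset.range (2*m), f n = 0 := by
  have h2 : 2*m = m + m := by ring
  rw [h2, Finset.sum_range_add]
  have h3 : ∀ n ∈ Finset.range m, f (m + n) = f n := by
    intro n _; rw [Nat.add_comm]; exact hf n
  rw [Finset.sum_congr rfl h3]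
  have h4 : ∀ x : ZMod 2, x + x = 0 := by decide
  exact h4 _

lemma eta_liftable : M.IsLiftable (eta cs) := by
  intro i j
  funext p
  have ha : (σ i * σ j) ^ M i j = 1 := cs.simple_mul_simple_pow i j
  rw [eta_eta_pow, ha]
  set a := σ i * σ j with ha_def
  set m := M i j
  -- key conjugation identities
  have hja : σ j * a = a⁻¹ * σ j := by
    simp [ha_def, mul_inv_rev, cs.inv_simple, mul_assoc]
  have hpow : ∀ l : ℕ, σ j * a ^ l = (a⁻¹) ^ l * σ j := by
    intro l
    have : σ j * a * (σ j)⁻¹ = a⁻¹ := by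
      rw [hja, mul_assoc, mul_inv_cancel, mul_one]
    calc σ j * a ^ l = (σ j * a * (σ j)⁻¹) ^ l * σ j := by
          rw [conj_pow]; simp [mul_assoc]
      _ = (a⁻¹) ^ l * σ j := by rw [this]
  have hsi : a * σ j = σ i := by
    rw [ha_def, mul_assoc, cs.simple_mul_simple_self, mul_one]
  have hsjsisj : σ j * σ i * σ j = a⁻¹ * σ i * a := by
    simp [ha_def, mul_inv_rev, cs.inv_simple, mul_assoc, cs.simple_mul_simple_cancel_left]
  -- d n
  set d : ℕ → W := fun n => (a⁻¹) ^ n * σ j with hd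
  have e0 : ∀ l : ℕ, (a⁻¹)^l * σ j * a ^ l = d (2*l) := by
    intro l
    rw [mul_assoc, hpow l, hd]
    simp only [← mul_assoc, ← pow_add]
    rw [two_mul]
  have e1 : ∀ (l : ℕ) (u : W), (a ^ l * u * (a ^ l)⁻¹ = σ j) ↔ (u = d (2*l)) := by
    intro l u
    rw [← e0 l]
    constructor
    · intro h
      have := congrArg (fun z => (a^l)⁻¹ * z * a^l) h
      simpa [mul_assoc, inv_pow] using this
    · intro h
      rw [h]
      simp [mul_assoc, inv_pow]
  have e0' : ∀ l : ℕ, (a⁻¹)^l * (σ j * σ i * σ j) * a ^ l = d (2*l+1) := by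
    intro l
    rw [hsjsisj]
    have : (a⁻¹)^l * (a⁻¹ * σ i * a) * a ^ l = (a⁻¹)^(l+1) * σ i * a^(l+1) := by
      calc (a⁻¹)^l * (a⁻¹ * σ i * a) * a ^ l
          = ((a⁻¹)^l * a⁻¹) * σ i * (a * a^l) := by simp [mul_assoc]
        _ = (a⁻¹)^(l+1) * σ i * a^(l+1) := by rw [← pow_succ, ← pow_succ']
    rw [this, ← hsi, hd]
    have h2 : (a⁻¹)^(l+1) * (a * σ j) * a^(l+1) = (a⁻¹)^(l+1) * (a * (σ j * a^(l+1))) := by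
      simp [mul_assoc]
    rw [h2, hpow (l+1)]
    have h3 : a * ((a⁻¹)^(l+1) * σ j) = (a⁻¹)^l * σ j := by
      rw [pow_succ']
      simp [← mul_assoc]
    rw [h3]
    simp only [← mul_assoc, ← pow_add]
    congr 1
    ring_nf
  have e2 : ∀ (l : ℕ) (u : W), (a ^ l * u * (a ^ l)⁻¹ = σ j * σ i * σ j) ↔ (u = d (2*l+1)) := by
    intro l u
    rw [← e0' l]
    constructor
    · intro h
      have := congrArg (fun z => (a^l)⁻¹ * z * a^l) h
      simpa [mul_assoc, inv_pow] using this
    · intro h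
      rw [h]
      simp [mul_assoc, inv_pow]
  -- now transform the sum
  have hone : (1 : Function.End (W × ZMod 2)) p = p := rfl
  rw [hone]
  refine Prod.ext (by simp) ?_
  show p.2 + _ = p.2
  have : ∑ l ∈ Finset.range m,
      ((if a ^ l * p.1 * (a ^ l)⁻¹ = σ j then (1:ZMod 2) else 0)
        + if a ^ l * p.1 * (a ^ l)⁻¹ = σ j * σ i * σ j then 1 else 0)
      = ∑ l ∈ Finset.range m,
      ((if p.1 = d (2*l) then (1:ZMod 2) else 0) + if p.1 = d (2*l+1) then 1 else 0) := by
    refine Finset.sum_congr rfl fun l _ => ?_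
    exact congrArg₂ (· + ·) (if_congr (e1 l p.1) rfl rfl) (if_congr (e2 l p.1) rfl rfl)
  rw [this, pair_sum (fun n => if p.1 = d n then (1:ZMod 2) else 0) m]
  rw [periodic_sum_zero _ m ?_, add_zero]
  intro n
  have ham : (a⁻¹) ^ m = 1 := by rw [inv_pow, ha, inv_one]
  simp only [hd, pow_add, ham, mul_one]

/-- The reflection-counting representation `W →* Function.End (W × ZMod 2)`. -/
noncomputable def nrep : W →* Function.End (W × ZMod 2) :=
  cs.lift ⟨eta cs, eta_liftable cs⟩

lemma nrep_simple (i : B) : nrep cs (σ i) = eta cs i := cs.lift_apply_simple (eta_liftable cs) i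

lemma nrep_wordProd (ω : List B) (p : W × ZMod 2) :
    nrep cs (π ω) p = (π ω * p.1 * (π ω)⁻¹, p.2 + cnt (cs.rightInvSeq ω) p.1) := by
  induction ω generalizing p with
  | nil => simp [cs.wordProd_nil]; rfl
  | cons i ω ih =>
    rw [cs.wordProd_cons, map_mul, nrep_simple]
    show eta cs i (nrep cs (π ω) p) = _
    rw [ih p]
    simp only [eta, rightInvSeq, cnt_cons]
    refine Prod.ext ?_ ?_
    · show σ i * (π ω * p.1 * (π ω)⁻¹) * σ i = _
      simp [mul_inv_rev, cs.inv_simple, mul_assoc]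
    · show _ + (if π ω * p.1 * (π ω)⁻¹ = σ i then (1:ZMod 2) else 0) = _
      have hiff : (π ω * p.1 * (π ω)⁻¹ = σ i) ↔ ((π ω)⁻¹ * σ i * π ω = p.1) := by
        constructor
        · intro h
          have := congrArg (fun z => (π ω)⁻¹ * z * π ω) h
          simp only [mul_assoc] at this ⊢
          simpa [mul_assoc] using this.symm
        · intro h; rw [← h]; simp [mul_assoc]
      rw [if_congr hiff rfl rfl]
      ring

/-- parity of the number of times `t` occurs in any inversion sequence of a word for `w` -/
noncomputable def nn (w t : W) : ZMod 2 := (nrep cs w (t, 0)).2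

lemma cnt_ris (ω : List B) (t : W) : cnt (cs.rightInvSeq ω) t = nn cs (π ω) t := by
  rw [nn, nrep_wordProd]; simp

lemma nrep_apply (w : W) (p : W × ZMod 2) :
    nrep cs w p = (w * p.1 * w⁻¹, p.2 + nn cs w p.1) := by
  obtain ⟨ω, rfl⟩ := cs.wordProd_surjective w
  rw [nrep_wordProd, cnt_ris]

lemma nn_mul (u v t : W) : nn cs (u * v) t = nn cs v t + nn cs u (v * t * v⁻¹) := by
  have : nrep cs (u * v) (t, 0) = nrep cs u (nrep cs v (t, 0)) := by
    rw [map_mul]; rfl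
  rw [nn, this, nrep_apply, nrep_apply]
  simp [nn]

lemma nn_simple (i : B) (t : W) : nn cs (σ i) t = if t = σ i then 1 else 0 := by
  rw [nn, nrep_simple]; simp [eta]

lemma nn_refl_self {t : W} (ht : cs.IsReflection t) : nn cs t t = 1 := by
  obtain ⟨w, i, rfl⟩ := ht
  have h1 : nn cs (w * σ i * w⁻¹) (w * σ i * w⁻¹)
      = nn cs (σ i * w⁻¹) (w * σ i * w⁻¹)
        + nn cs w ((σ i * w⁻¹) * (w * σ i * w⁻¹) * (σ i * w⁻¹)⁻¹) := by
    have h : w * σ i * w⁻¹ = w * (σ i * w⁻¹) := by simp [mul_assoc]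
    nth_rewrite 1 [h]
    exact nn_mul cs w (σ i * w⁻¹) (w * σ i * w⁻¹)
  have h2 : (σ i * w⁻¹) * (w * σ i * w⁻¹) * (σ i * w⁻¹)⁻¹ = σ i := by
    simp [mul_assoc, mul_inv_rev, cs.inv_simple, cs.simple_mul_simple_cancel_left]
  have h3 : nn cs (σ i * w⁻¹) (w * σ i * w⁻¹)
      = nn cs (w⁻¹) (w * σ i * w⁻¹) + nn cs (σ i) (w⁻¹ * (w * σ i * w⁻¹) * w) := by
    have := nn_mul cs (σ i) (w⁻¹) (w * σ i * w⁻¹)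
    simpa using this
  have h4 : w⁻¹ * (w * σ i * w⁻¹) * w = σ i := by
    simp [mul_assoc]
  have h5 : nn cs (w⁻¹) (w * σ i * w⁻¹) = nn cs w (σ i) := by
    have h0 : nn cs (w⁻¹ * w) (σ i) = nn cs w (σ i) + nn cs (w⁻¹) (w * σ i * w⁻¹) := nn_mul ..
    rw [inv_mul_cancel] at h0
    have : nn cs (1:W) (σ i) = 0 := by rw [nn, map_one]; rfl
    rw [this] at h0
    have hx : ∀ x y : ZMod 2, 0 = x + y → y = x := by decide
    exact hx _ _ h0
  rw [h1, h2, h3, h4, h5, nn_simple]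
  simp only [if_pos rfl]
  have : ∀ x : ZMod 2, x + 1 + x = 1 := by decide
  exact this _

end BrAux
end

section
set_option linter.unusedSectionVars false
variable {B W : Type*} [Group W] {M : CoxeterMatrix B}
namespace BrAux
open CoxeterSystem List
variable (cs : CoxeterSystem M W)
local prefix:100 "σ" => cs.simple
local prefix:100 "π" => cs.wordProd
local prefix:100 "ℓ" => cs.length
noncomputable local instance : DecidableEq W := Classical.decEq W

lemma zmod2_cases : ∀ x : ZMod 2, x = 0 ∨ x = 1 := by decide

/-- `t` belongs to the right inversion sequence of *any* word for `w`, whenever `t` is a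
right inversion of `w`. -/
lemma mem_ris_of_inversion {t w : W} (ht : cs.IsReflection t) (hlen : ℓ (w * t) < ℓ w)
    {ω : List B} (hω : π ω = w) : t ∈ cs.rightInvSeq ω := by
  have hnn : nn cs w t = 1 := by
    rcases zmod2_cases (nn cs w t) with h0 | h1
    · exfalso
      have hwt : nn cs (w * t) t = 1 := by
        have h := nn_mul cs w t t
        rw [ht.mul_self, one_mul, ht.inv] at h
        rw [h, nn_refl_self cs ht, h0, add_zero]
      obtain ⟨κ, hκred, hκ⟩ := cs.exists_reduced_word' (w * t)
      have hcnt : cnt (cs.rightInvSeq κ) t = 1 := by rw [cnt_ris, ← hκ, hwt]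
      have hmem : t ∈ cs.rightInvSeq κ := mem_of_cnt_ne_zero (by rw [hcnt]; decide)
      have hinv := cs.isRightInversion_of_mem_rightInvSeq hκred hmem
      rw [← hκ] at hinv
      have h2 : ℓ (w * t * t) < ℓ (w * t) := hinv.2
      rw [mul_assoc, ht.mul_self, mul_one] at h2
      omega
    · exact h1
  have hcnt : cnt (cs.rightInvSeq ω) t = 1 := by rw [cnt_ris, hω, hnn]
  exact mem_of_cnt_ne_zero (by rw [hcnt]; decide)

/-- Strong exchange property. -/
lemma strong_exchange {t w : W} (ht : cs.IsReflection t) (hlen : ℓ (w * t) < ℓ w)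
    {ω : List B} (hω : π ω = w) :
    ∃ j < ω.length, π (ω.eraseIdx j) = w * t := by
  have hmem := mem_ris_of_inversion cs ht hlen hω
  obtain ⟨j, hj, hget⟩ := List.mem_iff_getElem.mp hmem
  rw [cs.length_rightInvSeq] at hj
  refine ⟨j, hj, ?_⟩
  have h := cs.wordProd_mul_getD_rightInvSeq ω j
  rw [hω] at h
  rw [← h]
  congr 1
  rw [List.getD_eq_getElem _ _ (by rw [cs.length_rightInvSeq]; exact hj)]
  exact hget

lemma length_wordProd_mod_two (ω : List B) : ℓ (π ω) % 2 = ω.length % 2 := by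
  induction ω with
  | nil => simp
  | cons i ω ih =>
    rw [cs.wordProd_cons]
    have h := cs.length_simple_mul (π ω) i
    simp only [List.length_cons]
    rcases h with h | h <;> omega

lemma exists_reduced_sublist_aux : ∀ (n : ℕ) (ω : List B), ω.length ≤ n →
    ∃ ω' : List B, ω'.Sublist ω ∧ cs.IsReduced ω' ∧ π ω' = π ω := by
  intro n
  induction n using Nat.strong_induction_on with
  | _ n ih =>
    intro ω hn
    by_cases hred : cs.IsReduced ω
    · exact ⟨ω, List.Sublist.refl ω, hred, rfl⟩
    have hlen : 0 < ω.length := by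
      rcases Nat.eq_zero_or_pos ω.length with h | h
      · exfalso; apply hred
        rw [List.length_eq_zero_iff] at h
        subst h; simp [CoxeterSystem.IsReduced]
      · exact h
    have hex : ∃ k, ¬ cs.IsReduced (ω.take (k+1)) := by
      refine ⟨ω.length - 1, ?_⟩
      rw [Nat.sub_add_cancel hlen, List.take_length]
      exact hred
    classical
    set k := Nat.find hex with hkdef
    have hknot : ¬ cs.IsReduced (ω.take (k+1)) := Nat.find_spec hex
    have hkred : cs.IsReduced (ω.take k) := by
      rcases Nat.eq_zero_or_pos k with h0 | h0
      · rw [h0]; simp [CoxeterSystem.IsReduced]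
      · have h := Nat.find_min hex (m := k - 1) (by omega)
        rw [not_not] at h
        rwa [show k - 1 + 1 = k by omega] at h
    have hklt : k < ω.length := by
      by_contra h
      push_neg at h
      apply hknot
      rw [List.take_of_length_le (by omega)]
      rw [List.take_of_length_le h] at hkred
      exact hkred
    have htake : ω.take (k+1) = ω.take k ++ [ω[k]] := (List.take_concat_get' ω k hklt).symm
    have hprod : π (ω.take (k+1)) = π (ω.take k) * σ (ω[k]) := by
      rw [htake, cs.wordProd_append, cs.wordProd_singleton]
    have hlen1 : ℓ (π (ω.take k)) = k := by
      have h := hkred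
      rw [CoxeterSystem.IsReduced] at h
      rw [h, List.length_take]
      omega
    have hlt : ℓ (π (ω.take k) * σ (ω[k])) < ℓ (π (ω.take k)) := by
      have hne := cs.length_mul_simple (π (ω.take k)) (ω[k])
      have hupper : ℓ (π (ω.take (k+1))) < (ω.take (k+1)).length := by
        have hle := cs.length_wordProd_le (ω.take (k+1))
        rcases Nat.lt_or_ge (ℓ (π (ω.take (k+1)))) ((ω.take (k+1)).length) with h | h
        · exact h
        · exact absurd (Nat.le_antisymm hle h) hknot
      have hlentake : (ω.take (k+1)).length = k+1 := by
        rw [List.length_take]; omega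
      rw [hlentake, hprod] at hupper
      rcases hne with h | h <;> omega
    obtain ⟨j, hj, hjprod⟩ := strong_exchange cs (cs.isReflection_simple (ω[k])) hlt rfl
    set ω₁ := (ω.take k).eraseIdx j ++ ω.drop (k+1) with hω₁
    have hsub : ω₁.Sublist ω := by
      have h1 : ((ω.take k).eraseIdx j).Sublist (ω.take k) := List.eraseIdx_sublist _ j
      have h2 : (ω.take k).Sublist (ω.take (k+1)) := by
        rw [htake]; exact List.sublist_append_left _ _
      have h3 : ω₁.Sublist (ω.take (k+1) ++ ω.drop (k+1)) :=
        List.Sublist.append (h1.trans h2) (List.Sublist.refl _)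
      rwa [List.take_append_drop] at h3
    have hπ : π ω₁ = π ω := by
      have hsplit : π ω = π (ω.take (k+1)) * π (ω.drop (k+1)) := by
        rw [← cs.wordProd_append, List.take_append_drop]
      rw [hω₁, cs.wordProd_append, hjprod, hsplit, hprod]
    have hlen₁ : ω₁.length < n := by
      have hlen_take : (ω.take k).length = k := by rw [List.length_take]; omega
      have he : ((ω.take k).eraseIdx j).length + 1 = k := by
        rw [List.length_eraseIdx_add_one hj, hlen_take]
      have hd : (ω.drop (k+1)).length = ω.length - (k+1) := by rw [List.length_drop]
      rw [hω₁, List.length_append, hd]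
      omega
    obtain ⟨ω', hsub', hred', hπ'⟩ := ih ω₁.length hlen₁ ω₁ (le_refl _)
    exact ⟨ω', hsub'.trans hsub, hred', hπ'.trans hπ⟩

lemma exists_reduced_sublist (ω : List B) :
    ∃ ω' : List B, ω'.Sublist ω ∧ cs.IsReduced ω' ∧ π ω' = π ω :=
  exists_reduced_sublist_aux cs ω.length ω (le_refl _)

end BrAux
end

section
set_option linter.unusedSectionVars false
set_option maxHeartbeats 1000000
variable {B W : Type*} [Group W] {M : CoxeterMatrix B}
namespace BrAux
open CoxeterSystem List
variable (cs : CoxeterSystem M W)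
local prefix:100 "σ" => cs.simple
local prefix:100 "π" => cs.wordProd
local prefix:100 "ℓ" => cs.length

lemma sublist_concat_split {l κ : List B} {i : B} (h : l.Sublist (κ ++ [i])) :
    l.Sublist κ ∨ ∃ κ', l = κ' ++ [i] ∧ κ'.Sublist κ := by
  have h' : l.reverse.Sublist (i :: κ.reverse) := by
    have := h.reverse
    simpa using this
  rcases List.sublist_cons_iff.mp h' with h1 | ⟨r, hr, h2⟩
  · left
    have := h1.reverse
    simpa using this
  · right
    refine ⟨r.reverse, ?_, by simpa using h2.reverse⟩
    have := congrArg List.reverse hr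
    simpa using this

/-- One step in a Bruhat chain: multiply by a reflection on the right, increasing length. -/
def brStep (x y : W) : Prop := ∃ t, cs.IsReflection t ∧ y = x * t ∧ ℓ x < ℓ y

/-- The Bruhat order, defined via chains of reflections. -/
def lec : W → W → Prop := Relation.ReflTransGen (brStep cs)

lemma lec_refl (x : W) : lec cs x x := Relation.ReflTransGen.refl

lemma lec_trans {x y z : W} (h1 : lec cs x y) (h2 : lec cs y z) : lec cs x z :=
  Relation.ReflTransGen.trans h1 h2

lemma lec_length {u v : W} (h : lec cs u v) : ℓ u ≤ ℓ v := by
  induction h with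
  | refl => exact le_refl _
  | tail _ hstep ih => obtain ⟨t, _, rfl, hl⟩ := hstep; omega

lemma lec_eq_of_length_ge {u v : W} (h : lec cs u v) (hl : ℓ v ≤ ℓ u) : u = v := by
  rcases Relation.ReflTransGen.cases_tail h with h1 | ⟨c, hc, t, _, rfl, hlen⟩
  · exact h1.symm
  · have := lec_length cs hc; omega

lemma lec_inv {u v : W} (h : lec cs u v) : lec cs u⁻¹ v⁻¹ := by
  induction h with
  | refl => exact lec_refl cs _
  | @tail b c hbc hstep ih =>
    obtain ⟨t, ht, rfl, hl⟩ := hstep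
    have h2 : b⁻¹ * (b * t * b⁻¹) = (b * t)⁻¹ := by
      simp [mul_assoc, mul_inv_rev, ht.inv]
    refine Relation.ReflTransGen.tail ih ⟨b * t * b⁻¹, ht.conj b, by rw [h2], ?_⟩
    rw [cs.length_inv, cs.length_inv]
    exact hl

lemma lec_inv_iff {u v : W} : lec cs u⁻¹ v⁻¹ ↔ lec cs u v := by
  constructor
  · intro h; simpa using lec_inv cs h
  · exact lec_inv cs

/-- a single-step on the right by a simple reflection, going up -/
lemma lec_mul_simple {w : W} {i : B} (h : ℓ w < ℓ (w * σ i)) : lec cs w (w * σ i) :=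
  Relation.ReflTransGen.single ⟨σ i, cs.isReflection_simple i, rfl, h⟩

lemma mul_simple_lec {w : W} {i : B} (h : ℓ (w * σ i) < ℓ w) : lec cs (w * σ i) w := by
  have h2 : lec cs (w * σ i) (w * σ i * σ i) :=
    lec_mul_simple cs (by rwa [cs.simple_mul_simple_cancel_right])
  rwa [cs.simple_mul_simple_cancel_right] at h2

lemma lec_simple_mul {w : W} {i : B} (h : ℓ w < ℓ (σ i * w)) : lec cs w (σ i * w) := by
  rw [← lec_inv_iff]
  have : ℓ w⁻¹ < ℓ (w⁻¹ * σ i) := by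
    rw [cs.length_inv]
    rw [show w⁻¹ * σ i = (σ i * w)⁻¹ by simp [mul_inv_rev, cs.inv_simple], cs.length_inv]
    exact h
  simpa [mul_inv_rev, cs.inv_simple] using lec_mul_simple cs this

lemma simple_mul_lec {w : W} {i : B} (h : ℓ (σ i * w) < ℓ w) : lec cs (σ i * w) w := by
  have h2 : lec cs (σ i * w) (σ i * (σ i * w)) :=
    lec_simple_mul cs (by rwa [cs.simple_mul_simple_cancel_left])
  rwa [cs.simple_mul_simple_cancel_left] at h2

/-- (B): if `u ≤ w` in the chain order, then every reduced word for `w`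
has a reduced sublist which is a word for `u`. -/
lemma lec_subword {u w : W} (h : lec cs u w) :
    ∀ ω : List B, cs.IsReduced ω → π ω = w →
      ∃ ω' : List B, ω'.Sublist ω ∧ cs.IsReduced ω' ∧ π ω' = u := by
  induction h with
  | refl => exact fun ω hr hp => ⟨ω, List.Sublist.refl ω, hr, hp⟩
  | @tail b c hbc hstep ih =>
    intro ω hr hp
    obtain ⟨t, ht, rfl, hlen⟩ := hstep
    have hlt : ℓ (π ω * t) < ℓ (π ω) := by
      rw [hp, mul_assoc, ht.mul_self, mul_one]
      exact hlen
    obtain ⟨j, hj, hje⟩ := strong_exchange cs ht hlt rfl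
    have hjb : π (ω.eraseIdx j) = b := by
      rw [hje, hp, mul_assoc, ht.mul_self, mul_one]
    obtain ⟨κ, hκsub, hκred, hκprod⟩ := exists_reduced_sublist cs (ω.eraseIdx j)
    obtain ⟨ω', h1, h2, h3⟩ := ih κ hκred (by rw [hκprod, hjb])
    exact ⟨ω', h1.trans (hκsub.trans (List.eraseIdx_sublist _ _)), h2, h3⟩

/-- statement C(n) -/
def Cst (n : ℕ) : Prop := ∀ ω : List B, cs.IsReduced ω → ω.length ≤ n →
  ∀ ω' : List B, ω'.Sublist ω → lec cs (cs.wordProd ω') (cs.wordProd ω)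

/-- statement L(n) -/
def Lst (n : ℕ) : Prop := ∀ v u : W, ∀ i : B, ℓ v ≤ n → lec cs u v →
  ℓ v < ℓ (v * σ i) → lec cs (u * σ i) (v * σ i)

/-- statement N(n) -/
def Nst (n : ℕ) : Prop := ∀ v u : W, ∀ i : B, ℓ v ≤ n → lec cs u v →
  ℓ (v * σ i) < ℓ v → ℓ u < ℓ (u * σ i) → lec cs (u * σ i) v

lemma CLN : ∀ n : ℕ, Cst cs n ∧ Lst cs n ∧ Nst cs n := by
  intro n
  induction n using Nat.strong_induction_on with
  | _ n ih =>
    -- first L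
    have hL : Lst cs n := by
      intro v u i hv hle hup
      rcases Relation.ReflTransGen.cases_tail hle with rfl | ⟨v₁, h1, t, ht, rfl, hlt⟩
      · exact lec_refl cs _
      · set v := v₁ * t with hv_def
        have hv₁ : ℓ v₁ < n := by
          have : ℓ v₁ < ℓ v := hlt
          omega
        rcases Nat.lt_or_ge (ℓ (v₁ * σ i)) (ℓ v₁) with hdown | hup1
        · rcases Nat.lt_or_ge (ℓ (u * σ i)) (ℓ u) with hud | huu
          · -- u*σi ≤ u ≤ v₁ → v → v*σi
            have c1 : lec cs (u * σ i) u := mul_simple_lec cs hud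
            have c2 : lec cs v₁ v := Relation.ReflTransGen.single ⟨t, ht, rfl, hlt⟩
            have c3 : lec cs v (v * σ i) := lec_mul_simple cs hup
            exact lec_trans cs c1 (lec_trans cs h1 (lec_trans cs c2 c3))
          · have huu' : ℓ u < ℓ (u * σ i) := by
              have := cs.length_mul_simple_ne u i
              omega
            have c1 : lec cs (u * σ i) v₁ :=
              (ih (ℓ v₁) hv₁).2.2 v₁ u i (le_refl _) h1 hdown huu'
            have c2 : lec cs v₁ v := Relation.ReflTransGen.single ⟨t, ht, rfl, hlt⟩
            have c3 : lec cs v (v * σ i) := lec_mul_simple cs hup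
            exact lec_trans cs c1 (lec_trans cs c2 c3)
        · have hup1' : ℓ v₁ < ℓ (v₁ * σ i) := by
            have := cs.length_mul_simple_ne v₁ i
            omega
          have c1 : lec cs (u * σ i) (v₁ * σ i) :=
            (ih (ℓ v₁) hv₁).2.1 v₁ u i (le_refl _) h1 hup1'
          have c2 : lec cs (v₁ * σ i) (v * σ i) := by
            refine Relation.ReflTransGen.single ⟨σ i * t * σ i, ?_, ?_, ?_⟩
            · have := ht.conj (σ i)
              simpa [cs.inv_simple] using this
            · rw [hv_def]
              simp [mul_assoc, cs.simple_mul_simple_cancel_left]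
            · have e1 : ℓ (v₁ * σ i) = ℓ v₁ + 1 := by
                have := cs.length_mul_simple v₁ i
                omega
              omega
          exact lec_trans cs c1 c2
    -- then N
    have hN : Nst cs n := by
      intro v u i hv hle hdown hup
      obtain ⟨κ, hκred, hκ⟩ := cs.exists_reduced_word' (v * σ i)
      have hvlen : ℓ (v * σ i) = ℓ v - 1 ∧ 1 ≤ ℓ v := by
        have := cs.length_mul_simple v i
        omega
      have hωred : cs.IsReduced (κ ++ [i]) := by
        rw [CoxeterSystem.IsReduced, cs.wordProd_append, cs.wordProd_singleton, ← hκ,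
          cs.simple_mul_simple_cancel_right]
        rw [List.length_append, List.length_singleton]
        have hκlen : κ.length = ℓ (v * σ i) := by
          rw [CoxeterSystem.IsReduced] at hκred
          rw [← hκred, ← hκ]
        omega
      have hωprod : π (κ ++ [i]) = v := by
        rw [cs.wordProd_append, cs.wordProd_singleton, ← hκ,
          cs.simple_mul_simple_cancel_right]
      obtain ⟨ω', hsub, hred', hprod'⟩ := lec_subword cs hle (κ ++ [i]) hωred hωprod
      rcases sublist_concat_split hsub with hsubκ | ⟨κ', rfl, hsubκ'⟩
      · -- u ≤ v*σi, then go back up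
        have hκlen : κ.length = ℓ (v * σ i) := by
          have h := hκred
          rw [CoxeterSystem.IsReduced] at h
          rw [← h, ← hκ]
        have hκn : κ.length ≤ n - 1 := by omega
        have c1 : lec cs u (v * σ i) := by
          have := (ih (n-1) (by omega)).1 κ hκred hκn ω' hsubκ
          rwa [hprod', ← hκ] at this
        have c2 : lec cs (u * σ i) ((v * σ i) * σ i) := by
          refine (ih (n-1) (by omega)).2.1 (v * σ i) u i (by omega) c1 ?_
          rw [cs.simple_mul_simple_cancel_right]
          omega
        rwa [cs.simple_mul_simple_cancel_right] at c2
      · -- impossible: u would have a descent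
        exfalso
        rw [cs.wordProd_append, cs.wordProd_singleton] at hprod'
        have hu : u * σ i = π κ' := by
          rw [← hprod', cs.simple_mul_simple_cancel_right]
        have hlenu : ℓ u = κ'.length + 1 := by
          have h := hred'
          rw [CoxeterSystem.IsReduced] at h
          rw [cs.wordProd_append, cs.wordProd_singleton, hprod'] at h
          rw [List.length_append, List.length_singleton] at h
          exact h
        have : ℓ (u * σ i) ≤ κ'.length := by
          rw [hu]; exact cs.length_wordProd_le κ'
        omega
    -- then C
    have hC : Cst cs n := by
      intro ω hred hn ω' hsub
      match ω, hsub with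
      | [], hsub =>
        have : ω' = [] := List.sublist_nil.mp (by exact hsub)
        subst this
        exact lec_refl cs _
      | (j :: ω₀), hsub =>
        by_cases hlen_eq : (j :: ω₀).length = n
        case neg =>
          have : (j :: ω₀).length < n := by
            have := hn; rw [List.length_cons] at this
            omega
          exact (ih _ this).1 (j :: ω₀) hred (le_refl _) ω' hsub
        case pos =>
        have hω₀red : cs.IsReduced ω₀ := by
          have := hred.drop 1
          simpa using this
        have hω₀len : ω₀.length = n - 1 ∧ 1 ≤ n := by
          rw [List.length_cons] at hlen_eq
          omega
        have hlω : ℓ (π (j :: ω₀)) = n := by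
          rw [CoxeterSystem.IsReduced] at hred
          rw [hred, hlen_eq]
        have hlω₀ : ℓ (π ω₀) = n - 1 := by
          rw [CoxeterSystem.IsReduced] at hω₀red
          rw [hω₀red, hω₀len.1]
        have hstep0 : lec cs (π ω₀) (π (j :: ω₀)) := by
          rw [cs.wordProd_cons]
          have : ℓ (π ω₀) < ℓ (σ j * π ω₀) := by
            rw [← cs.wordProd_cons, hlω, hlω₀]
            omega
          exact lec_simple_mul cs this
        rcases List.sublist_cons_iff.mp hsub with hsub₀ | ⟨ω₁, rfl, hsub₁⟩
        · have c1 : lec cs (π ω') (π ω₀) :=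
            (ih (n-1) (by omega)).1 ω₀ hω₀red (by omega) ω' hsub₀
          exact lec_trans cs c1 hstep0
        · have c1 : lec cs (π ω₁) (π ω₀) :=
            (ih (n-1) (by omega)).1 ω₀ hω₀red (by omega) ω₁ hsub₁
          -- left multiplication by σ j via inverses
          have c2 : lec cs (π ω₁)⁻¹ (π ω₀)⁻¹ := lec_inv cs c1
          have hupinv : ℓ ((π ω₀)⁻¹) < ℓ ((π ω₀)⁻¹ * σ j) := by
            rw [cs.length_inv]
            rw [show (π ω₀)⁻¹ * σ j = (σ j * π ω₀)⁻¹ by simp [mul_inv_rev, cs.inv_simple],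
              cs.length_inv, ← cs.wordProd_cons, hlω, hlω₀]
            omega
          have c3 : lec cs ((π ω₁)⁻¹ * σ j) ((π ω₀)⁻¹ * σ j) :=
            hL (π ω₀)⁻¹ (π ω₁)⁻¹ j (by rw [cs.length_inv]; omega) c2 hupinv
          have c4 := lec_inv cs c3
          simp only [mul_inv_rev, cs.inv_simple, inv_inv] at c4
          rw [cs.wordProd_cons, cs.wordProd_cons]
          exact c4
    exact ⟨hC, hL, hN⟩

end BrAux
end

section
set_option linter.unusedSectionVars false
set_option maxHeartbeats 1000000
variable {B W : Type*} [Group W] {M : CoxeterMatrix B}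
namespace BrAux
open CoxeterSystem List
variable (cs : CoxeterSystem M W)
local prefix:100 "σ" => cs.simple
local prefix:100 "π" => cs.wordProd
local prefix:100 "ℓ" => cs.length

/-! ### Equivalence of `BruhatLE` with the chain order, and basic order properties -/

lemma bruhatLE_iff_lec {u v : W} : BruhatLE cs u v ↔ lec cs u v := by
  constructor
  · rintro ⟨ω, hred, hπ, ω', hsub, hπ'⟩
    have := (CLN cs ω.length).1 ω hred (le_refl _) ω' hsub
    rwa [hπ, hπ'] at this
  · intro h
    obtain ⟨ω, hred, hπ⟩ := cs.exists_reduced_word' v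
    obtain ⟨ω', hsub, hred', hπ'⟩ := lec_subword cs h ω hred hπ.symm
    exact ⟨ω, hred, hπ.symm, ω', hsub, hπ'⟩

lemma le_refl' (w : W) : BruhatLE cs w w := (bruhatLE_iff_lec cs).mpr (lec_refl cs w)

lemma le_trans' {u v w : W} (h1 : BruhatLE cs u v) (h2 : BruhatLE cs v w) : BruhatLE cs u w :=
  (bruhatLE_iff_lec cs).mpr (lec_trans cs ((bruhatLE_iff_lec cs).mp h1) ((bruhatLE_iff_lec cs).mp h2))

lemma one_le (w : W) : BruhatLE cs 1 w := by
  obtain ⟨ω, hred, hπ⟩ := cs.exists_reduced_word' w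
  exact ⟨ω, hred, hπ.symm, [], List.nil_sublist ω, cs.wordProd_nil⟩

lemma le_length {u v : W} (h : BruhatLE cs u v) : ℓ u ≤ ℓ v :=
  lec_length cs ((bruhatLE_iff_lec cs).mp h)

lemma le_eq_of_length_ge {u v : W} (h : BruhatLE cs u v) (hl : ℓ v ≤ ℓ u) : u = v :=
  lec_eq_of_length_ge cs ((bruhatLE_iff_lec cs).mp h) hl

lemma le_inv_iff {u v : W} : BruhatLE cs u⁻¹ v⁻¹ ↔ BruhatLE cs u v := by
  rw [bruhatLE_iff_lec, bruhatLE_iff_lec]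
  exact lec_inv_iff cs

/-- subword property w.r.t. any chosen reduced word -/
lemma le_subword {u v : W} (h : BruhatLE cs u v) {ω : List B} (hred : cs.IsReduced ω)
    (hπ : π ω = v) : ∃ ω' : List B, ω'.Sublist ω ∧ cs.IsReduced ω' ∧ π ω' = u :=
  lec_subword cs ((bruhatLE_iff_lec cs).mp h) ω hred hπ

lemma subword_le {ω ω' : List B} (hred : cs.IsReduced ω) (hsub : ω'.Sublist ω) :
    BruhatLE cs (π ω') (π ω) :=
  (bruhatLE_iff_lec cs).mpr ((CLN cs ω.length).1 ω hred (le_refl _) ω' hsub)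

/-! ### single steps -/

lemma le_mul_simple {w : W} {i : B} (h : ℓ w < ℓ (w * σ i)) : BruhatLE cs w (w * σ i) :=
  (bruhatLE_iff_lec cs).mpr (lec_mul_simple cs h)

lemma mul_simple_le {w : W} {i : B} (h : ℓ (w * σ i) < ℓ w) : BruhatLE cs (w * σ i) w :=
  (bruhatLE_iff_lec cs).mpr (mul_simple_lec cs h)

lemma le_simple_mul {w : W} {i : B} (h : ℓ w < ℓ (σ i * w)) : BruhatLE cs w (σ i * w) :=
  (bruhatLE_iff_lec cs).mpr (lec_simple_mul cs h)

lemma simple_mul_le {w : W} {i : B} (h : ℓ (σ i * w) < ℓ w) : BruhatLE cs (σ i * w) w :=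
  (bruhatLE_iff_lec cs).mpr (simple_mul_lec cs h)

/-! ### lifting lemmas (right versions) -/

lemma liftR {u v : W} {i : B} (h : BruhatLE cs u v) (hv : ℓ v < ℓ (v * σ i)) :
    BruhatLE cs (u * σ i) (v * σ i) :=
  (bruhatLE_iff_lec cs).mpr <|
    (CLN cs (ℓ v)).2.1 v u i (le_refl _) ((bruhatLE_iff_lec cs).mp h) hv

lemma liftNR {u v : W} {i : B} (h : BruhatLE cs u v) (hv : ℓ (v * σ i) < ℓ v)
    (hu : ℓ u < ℓ (u * σ i)) : BruhatLE cs (u * σ i) v :=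
  (bruhatLE_iff_lec cs).mpr <|
    (CLN cs (ℓ v)).2.2 v u i (le_refl _) ((bruhatLE_iff_lec cs).mp h) hv hu

/-- helper: length via inverse for left multiplication -/
lemma length_inv_mul_simple (v : W) (i : B) : ℓ (v⁻¹ * σ i) = ℓ (σ i * v) := by
  rw [show v⁻¹ * σ i = (σ i * v)⁻¹ by simp [mul_inv_rev, cs.inv_simple], cs.length_inv]

/-! ### lifting lemmas (left versions) -/

lemma liftL {u v : W} {i : B} (h : BruhatLE cs u v) (hv : ℓ v < ℓ (σ i * v)) :
    BruhatLE cs (σ i * u) (σ i * v) := by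
  rw [← le_inv_iff] at h
  have h2 := liftR cs h (i := i) (by rw [cs.length_inv, length_inv_mul_simple]; exact hv)
  rw [← le_inv_iff]
  simpa [mul_inv_rev, cs.inv_simple] using h2

lemma liftNL {u v : W} {i : B} (h : BruhatLE cs u v) (hv : ℓ (σ i * v) < ℓ v)
    (hu : ℓ u < ℓ (σ i * u)) : BruhatLE cs (σ i * u) v := by
  rw [← le_inv_iff] at h
  have h2 := liftNR cs h (i := i)
    (by rw [cs.length_inv, length_inv_mul_simple]; exact hv)
    (by rw [cs.length_inv, length_inv_mul_simple]; exact hu)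
  rw [← le_inv_iff]
  simpa [mul_inv_rev, cs.inv_simple] using h2

/-- a reduced word for `v*σi` extended by `i` is a reduced word for `v`, when `ℓ(vσi) < ℓ v`. -/
lemma reduced_concat_of_descent {v : W} {i : B} (hv : ℓ (v * σ i) < ℓ v) :
    ∃ κ : List B, cs.IsReduced κ ∧ π κ = v * σ i ∧
      cs.IsReduced (κ ++ [i]) ∧ π (κ ++ [i]) = v := by
  obtain ⟨κ, hκred, hκ⟩ := cs.exists_reduced_word' (v * σ i)
  have hκlen : κ.length = ℓ (v * σ i) := by
    have h := hκred; rw [CoxeterSystem.IsReduced] at h; rw [← h, ← hκ]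
  have hvlen : ℓ (v * σ i) + 1 = ℓ v := by
    have := cs.length_mul_simple v i; omega
  have hprod : π (κ ++ [i]) = v := by
    rw [cs.wordProd_append, cs.wordProd_singleton, ← hκ, cs.simple_mul_simple_cancel_right]
  refine ⟨κ, hκred, hκ.symm, ?_, hprod⟩
  rw [CoxeterSystem.IsReduced, hprod, List.length_append, List.length_singleton]
  omega

/-- Z property (right): `u ≤ v·σi`, `ℓ v < ℓ(vσi)` implies `u ≤ v` or `u·σi ≤ v`. -/
lemma propZR {u v : W} {i : B} (h : BruhatLE cs u (v * σ i)) (hv : ℓ v < ℓ (v * σ i)) :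
    BruhatLE cs u v ∨ BruhatLE cs (u * σ i) v := by
  obtain ⟨κ, hκred, hκ⟩ := cs.exists_reduced_word' v
  have hκlen : κ.length = ℓ v := by
    have h' := hκred; rw [CoxeterSystem.IsReduced] at h'; rw [← h', ← hκ]
  have hωred : cs.IsReduced (κ ++ [i]) := by
    rw [CoxeterSystem.IsReduced, cs.wordProd_append, cs.wordProd_singleton, ← hκ,
      List.length_append, List.length_singleton]
    have := cs.length_mul_simple v i
    omega
  have hωprod : π (κ ++ [i]) = v * σ i := by
    rw [cs.wordProd_append, cs.wordProd_singleton, ← hκ]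
  obtain ⟨ω', hsub, hred', hprod'⟩ := le_subword cs h hωred hωprod
  rcases sublist_concat_split hsub with hsubκ | ⟨κ', rfl, hsubκ'⟩
  · left
    have := subword_le cs hκred hsubκ
    rwa [hprod', ← hκ] at this
  · right
    rw [cs.wordProd_append, cs.wordProd_singleton] at hprod'
    have hu : u * σ i = π κ' := by rw [← hprod', cs.simple_mul_simple_cancel_right]
    have := subword_le cs hκred hsubκ'
    rwa [← hu, ← hκ] at this

/-- Z property (left). -/
lemma propZL {u v : W} {i : B} (h : BruhatLE cs u (σ i * v)) (hv : ℓ v < ℓ (σ i * v)) :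
    BruhatLE cs u v ∨ BruhatLE cs (σ i * u) v := by
  rw [← le_inv_iff] at h
  have h2 : BruhatLE cs u⁻¹ (v⁻¹ * σ i) := by
    simpa [mul_inv_rev, cs.inv_simple] using h
  have hv2 : ℓ v⁻¹ < ℓ (v⁻¹ * σ i) := by
    rw [cs.length_inv, length_inv_mul_simple]; exact hv
  rcases propZR cs h2 hv2 with h3 | h3
  · left; rwa [le_inv_iff] at h3
  · right
    have : u⁻¹ * σ i = (σ i * u)⁻¹ := by simp [mul_inv_rev, cs.inv_simple]
    rw [this] at h3
    rwa [le_inv_iff] at h3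

/-- lifting, part iiiA (right): `u ≤ v`, both have right descent `i`: `uσi ≤ vσi`. -/
lemma liftDDR {u v : W} {i : B} (h : BruhatLE cs u v) (hv : ℓ (v * σ i) < ℓ v)
    (hu : ℓ (u * σ i) < ℓ u) : BruhatLE cs (u * σ i) (v * σ i) := by
  obtain ⟨κ, hκred, hκprod, hωred, hωprod⟩ := reduced_concat_of_descent cs hv
  obtain ⟨ω', hsub, hred', hprod'⟩ := le_subword cs h hωred hωprod
  rcases sublist_concat_split hsub with hsubκ | ⟨κ', rfl, hsubκ'⟩
  · -- u ≤ v*σi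
    have h2 : BruhatLE cs u (v * σ i) := by
      have := subword_le cs hκred hsubκ
      rwa [hprod', hκprod] at this
    exact le_trans' cs (mul_simple_le cs hu) h2
  · rw [cs.wordProd_append, cs.wordProd_singleton] at hprod'
    have hu2 : u * σ i = π κ' := by rw [← hprod', cs.simple_mul_simple_cancel_right]
    have := subword_le cs hκred hsubκ'
    rwa [← hu2, hκprod] at this

/-- lifting, part iiiB (right): `u ≤ v`, `v` has a right descent `i` but `u` does not:
`u ≤ vσi`. -/
lemma liftDUR {u v : W} {i : B} (h : BruhatLE cs u v) (hv : ℓ (v * σ i) < ℓ v)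
    (hu : ℓ u < ℓ (u * σ i)) : BruhatLE cs u (v * σ i) := by
  obtain ⟨κ, hκred, hκprod, hωred, hωprod⟩ := reduced_concat_of_descent cs hv
  obtain ⟨ω', hsub, hred', hprod'⟩ := le_subword cs h hωred hωprod
  rcases sublist_concat_split hsub with hsubκ | ⟨κ', rfl, hsubκ'⟩
  · have := subword_le cs hκred hsubκ
    rwa [hprod', hκprod] at this
  · exfalso
    rw [cs.wordProd_append, cs.wordProd_singleton] at hprod'
    have hu2 : u * σ i = π κ' := by rw [← hprod', cs.simple_mul_simple_cancel_right]
    have hlenu : ℓ u = κ'.length + 1 := by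
      have h' := hred'
      rw [CoxeterSystem.IsReduced] at h'
      rw [cs.wordProd_append, cs.wordProd_singleton, hprod'] at h'
      rw [List.length_append, List.length_singleton] at h'
      exact h'
    have : ℓ (u * σ i) ≤ κ'.length := by rw [hu2]; exact cs.length_wordProd_le κ'
    omega

/-- left versions of iiiA/iiiB -/
lemma liftDDL {u v : W} {i : B} (h : BruhatLE cs u v) (hv : ℓ (σ i * v) < ℓ v)
    (hu : ℓ (σ i * u) < ℓ u) : BruhatLE cs (σ i * u) (σ i * v) := by
  rw [← le_inv_iff] at h
  have h2 := liftDDR cs h (i := i)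
    (by rw [cs.length_inv, length_inv_mul_simple]; exact hv)
    (by rw [cs.length_inv, length_inv_mul_simple]; exact hu)
  rw [← le_inv_iff]
  simpa [mul_inv_rev, cs.inv_simple] using h2

lemma liftDUL {u v : W} {i : B} (h : BruhatLE cs u v) (hv : ℓ (σ i * v) < ℓ v)
    (hu : ℓ u < ℓ (σ i * u)) : BruhatLE cs u (σ i * v) := by
  rw [← le_inv_iff] at h
  have h2 := liftDUR cs h (i := i)
    (by rw [cs.length_inv, length_inv_mul_simple]; exact hv)
    (by rw [cs.length_inv, length_inv_mul_simple]; exact hu)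
  rw [← le_inv_iff]
  simpa [mul_inv_rev, cs.inv_simple] using h2

end BrAux
end

section
set_option linter.unusedSectionVars false
set_option maxHeartbeats 1000000
variable {B W : Type*} [Group W] {M : CoxeterMatrix B}
namespace BrAux
open CoxeterSystem List
variable (cs : CoxeterSystem M W)
local prefix:100 "σ" => cs.simple
local prefix:100 "π" => cs.wordProd
local prefix:100 "ℓ" => cs.length

/-! ### standard parabolic subgroups -/

lemma word_mem_parabolic {X : Set B} {ω : List B} (hω : ∀ i ∈ ω, i ∈ X) :
    π ω ∈ Subgroup.closure (cs.simple '' X) := by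
  induction ω with
  | nil => rw [cs.wordProd_nil]; exact Subgroup.one_mem _
  | cons j ω₀ ih =>
    rw [cs.wordProd_cons]
    refine Subgroup.mul_mem _ ?_ (ih fun i hi => hω i (List.mem_cons_of_mem _ hi))
    exact Subgroup.subset_closure ⟨j, hω j (List.mem_cons_self), rfl⟩

lemma mem_parabolic_word {X : Set B} {a : W} (ha : a ∈ Subgroup.closure (cs.simple '' X)) :
    ∃ ω : List B, (∀ i ∈ ω, i ∈ X) ∧ π ω = a := by
  induction ha using Subgroup.closure_induction with
  | mem g hg =>
    obtain ⟨i, hi, rfl⟩ := hg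
    exact ⟨[i], by simpa using hi, cs.wordProd_singleton i⟩
  | one => exact ⟨[], by simp, cs.wordProd_nil⟩
  | mul g h _ _ ihg ihh =>
    obtain ⟨ω₁, h1, rfl⟩ := ihg
    obtain ⟨ω₂, h2, rfl⟩ := ihh
    refine ⟨ω₁ ++ ω₂, ?_, cs.wordProd_append ω₁ ω₂⟩
    intro i hi
    rcases List.mem_append.mp hi with h | h
    · exact h1 i h
    · exact h2 i h
  | inv g _ ihg =>
    obtain ⟨ω, h1, rfl⟩ := ihg
    refine ⟨ω.reverse, ?_, cs.wordProd_reverse ω⟩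
    intro i hi
    exact h1 i (List.mem_reverse.mp hi)

/-- `I(w·c) ⊆ I(w)·W_X` for `c ∈ W_X` (here `c = π ω` for an `X`-word `ω`). -/
lemma interval_mul_parabolic {X : Set B} (ω : List B) (hω : ∀ i ∈ ω, i ∈ X) (w : W) :
    ∀ y, BruhatLE cs y (w * π ω) →
      ∃ h c, BruhatLE cs h w ∧ c ∈ Subgroup.closure (cs.simple '' X) ∧ y = h * c := by
  induction ω using List.reverseRecOn generalizing w with
  | nil =>
    intro y hy
    rw [cs.wordProd_nil, mul_one] at hy
    exact ⟨y, 1, hy, Subgroup.one_mem _, (mul_one y).symm⟩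
  | append_singleton ω₀ j ih =>
    intro y hy
    have hω₀ : ∀ i ∈ ω₀, i ∈ X := fun i hi => hω i (List.mem_append_left _ hi)
    have hj : j ∈ X := hω j (List.mem_append_right _ (List.mem_singleton_self j))
    rw [cs.wordProd_append, cs.wordProd_singleton, ← mul_assoc] at hy
    set v' := w * π ω₀ with hv'
    rcases Nat.lt_or_ge (ℓ (v' * σ j)) (ℓ v') with hdown | hup
    · have hy2 : BruhatLE cs y v' := le_trans' cs hy (mul_simple_le cs hdown)
      exact ih hω₀ w y hy2
    · have hup' : ℓ v' < ℓ (v' * σ j) := by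
        have := cs.length_mul_simple_ne v' j; omega
      rcases propZR cs hy hup' with h1 | h1
      · exact ih hω₀ w y h1
      · obtain ⟨h, c, hh, hc, hyc⟩ := ih hω₀ w (y * σ j) h1
        refine ⟨h, c * σ j, hh, ?_, ?_⟩
        · exact Subgroup.mul_mem _ hc (Subgroup.subset_closure ⟨j, hj, rfl⟩)
        · have : y = (y * σ j) * σ j := by rw [cs.simple_mul_simple_cancel_right]
          rw [this, hyc, mul_assoc]

/-- if `w` has no right `X`-descents, then `w ≤ v` implies `w ≤ v * (X-word)` -/
lemma le_parabolic_mul_right {X : Set B} {w : W} (hw : ∀ i ∈ X, ℓ w < ℓ (w * σ i))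
    (ω : List B) (hω : ∀ i ∈ ω, i ∈ X) :
    ∀ v, BruhatLE cs w v → BruhatLE cs w (v * π ω) := by
  induction ω using List.reverseRecOn with
  | nil => intro v hv; rwa [cs.wordProd_nil, mul_one]
  | append_singleton ω₀ j ih =>
    intro v hv
    have hω₀ : ∀ i ∈ ω₀, i ∈ X := fun i hi => hω i (List.mem_append_left _ hi)
    have hj : j ∈ X := hω j (List.mem_append_right _ (List.mem_singleton_self j))
    rw [cs.wordProd_append, cs.wordProd_singleton, ← mul_assoc]
    have hY : BruhatLE cs w (v * π ω₀) := ih hω₀ v hv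
    set Y := v * π ω₀
    rcases Nat.lt_or_ge (ℓ Y) (ℓ (Y * σ j)) with hup | hdown
    · exact le_trans' cs hY (le_mul_simple cs hup)
    · have hdown' : ℓ (Y * σ j) < ℓ Y := by
        have := cs.length_mul_simple_ne Y j; omega
      exact liftDUR cs hY hdown' (hw j hj)

/-- if `w` has no left `X`-descents, then `w ≤ v` implies `w ≤ (X-word) * v` -/
lemma le_parabolic_mul_left {X : Set B} {w : W} (hw : ∀ i ∈ X, ℓ w < ℓ (σ i * w))
    (ω : List B) (hω : ∀ i ∈ ω, i ∈ X) :
    ∀ v, BruhatLE cs w v → BruhatLE cs w (π ω * v) := by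
  induction ω with
  | nil => intro v hv; rwa [cs.wordProd_nil, one_mul]
  | cons j ω₀ ih =>
    intro v hv
    have hω₀ : ∀ i ∈ ω₀, i ∈ X := fun i hi => hω i (List.mem_cons_of_mem _ hi)
    have hj : j ∈ X := hω j (List.mem_cons_self)
    rw [cs.wordProd_cons, mul_assoc]
    have hY : BruhatLE cs w (π ω₀ * v) := ih hω₀ v hv
    set Y := π ω₀ * v
    rcases Nat.lt_or_ge (ℓ Y) (ℓ (σ j * Y)) with hup | hdown
    · exact le_trans' cs hY (le_simple_mul cs hup)
    · have hdown' : ℓ (σ j * Y) < ℓ Y := by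
        have := cs.length_simple_mul_ne Y j; omega
      exact liftDUL cs hY hdown' (hw j hj)

/-- monotonicity helper (left): from `x ≤ y` produce `c*x ≤ (X-word)*y` with `c ∈ W_X`. -/
lemma exists_parab_le_left {X : Set B} (ω : List B) (hω : ∀ i ∈ ω, i ∈ X) :
    ∀ x y, BruhatLE cs x y →
      ∃ c ∈ Subgroup.closure (cs.simple '' X), BruhatLE cs (c * x) (π ω * y) := by
  induction ω with
  | nil =>
    intro x y h
    exact ⟨1, Subgroup.one_mem _, by rwa [cs.wordProd_nil, one_mul, one_mul]⟩
  | cons j ω₀ ih =>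
    intro x y h
    have hω₀ : ∀ i ∈ ω₀, i ∈ X := fun i hi => hω i (List.mem_cons_of_mem _ hi)
    have hj : j ∈ X := hω j (List.mem_cons_self)
    obtain ⟨c₀, hc₀, hle⟩ := ih hω₀ x y h
    rw [cs.wordProd_cons, mul_assoc]
    set Y := π ω₀ * y
    rcases Nat.lt_or_ge (ℓ Y) (ℓ (σ j * Y)) with hup | hdown
    · exact ⟨c₀, hc₀, le_trans' cs hle (le_simple_mul cs hup)⟩
    · have hdown' : ℓ (σ j * Y) < ℓ Y := by
        have := cs.length_simple_mul_ne Y j; omega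
      rcases Nat.lt_or_ge (ℓ (σ j * (c₀ * x))) (ℓ (c₀ * x)) with hd | hu
      · refine ⟨σ j * c₀, ?_, ?_⟩
        · exact Subgroup.mul_mem _ (Subgroup.subset_closure ⟨j, hj, rfl⟩) hc₀
        · rw [mul_assoc]
          exact liftDDL cs hle hdown' hd
      · have hu' : ℓ (c₀ * x) < ℓ (σ j * (c₀ * x)) := by
          have := cs.length_simple_mul_ne (c₀ * x) j; omega
        exact ⟨c₀, hc₀, liftDUL cs hle hdown' hu'⟩

/-- monotonicity helper (right). -/
lemma exists_parab_le_right {X : Set B} (ω : List B) (hω : ∀ i ∈ ω, i ∈ X) :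
    ∀ x y, BruhatLE cs x y →
      ∃ c ∈ Subgroup.closure (cs.simple '' X), BruhatLE cs (x * c) (y * π ω) := by
  induction ω using List.reverseRecOn with
  | nil =>
    intro x y h
    exact ⟨1, Subgroup.one_mem _, by rwa [cs.wordProd_nil, mul_one, mul_one]⟩
  | append_singleton ω₀ j ih =>
    intro x y h
    have hω₀ : ∀ i ∈ ω₀, i ∈ X := fun i hi => hω i (List.mem_append_left _ hi)
    have hj : j ∈ X := hω j (List.mem_append_right _ (List.mem_singleton_self j))
    obtain ⟨c₀, hc₀, hle⟩ := ih hω₀ x y h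
    rw [cs.wordProd_append, cs.wordProd_singleton, ← mul_assoc]
    set Y := y * π ω₀
    rcases Nat.lt_or_ge (ℓ Y) (ℓ (Y * σ j)) with hup | hdown
    · exact ⟨c₀, hc₀, le_trans' cs hle (le_mul_simple cs hup)⟩
    · have hdown' : ℓ (Y * σ j) < ℓ Y := by
        have := cs.length_mul_simple_ne Y j; omega
      rcases Nat.lt_or_ge (ℓ ((x * c₀) * σ j)) (ℓ (x * c₀)) with hd | hu
      · refine ⟨c₀ * σ j, ?_, ?_⟩
        · exact Subgroup.mul_mem _ hc₀ (Subgroup.subset_closure ⟨j, hj, rfl⟩)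
        · rw [← mul_assoc]
          exact liftDDR cs hle hdown' hd
      · have hu' : ℓ (x * c₀) < ℓ ((x * c₀) * σ j) := by
          have := cs.length_mul_simple_ne (x * c₀) j; omega
        exact ⟨c₀, hc₀, liftDUR cs hle hdown' hu'⟩

end BrAux
end

section
set_option linter.unusedSectionVars false
set_option maxHeartbeats 1000000
variable {B W : Type*} [Group W] {M : CoxeterMatrix B}
namespace BrAux
open CoxeterSystem List
variable (cs : CoxeterSystem M W)
local prefix:100 "σ" => cs.simple
local prefix:100 "π" => cs.wordProd
local prefix:100 "ℓ" => cs.length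

/-! ### double coset minima -/

lemma dblCoset_self (W₁ W₂ : Subgroup W) (w : W) : w ∈ dblCoset W₁ W₂ w :=
  ⟨1, Subgroup.one_mem _, 1, Subgroup.one_mem _, by simp⟩

lemma dblCoset_eq_left {W₁ W₂ : Subgroup W} {a₀ : W} (ha₀ : a₀ ∈ W₁) (w : W) :
    dblCoset W₁ W₂ (a₀ * w) = dblCoset W₁ W₂ w := by
  ext z
  constructor
  · rintro ⟨a, ha, b, hb, rfl⟩
    exact ⟨a * a₀, Subgroup.mul_mem _ ha ha₀, b, hb, by simp [mul_assoc]⟩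
  · rintro ⟨a, ha, b, hb, rfl⟩
    exact ⟨a * a₀⁻¹, Subgroup.mul_mem _ ha (Subgroup.inv_mem _ ha₀), b, hb, by simp [mul_assoc]⟩

lemma dblCoset_eq_right {W₁ W₂ : Subgroup W} {b₀ : W} (hb₀ : b₀ ∈ W₂) (w : W) :
    dblCoset W₁ W₂ (w * b₀) = dblCoset W₁ W₂ w := by
  ext z
  constructor
  · rintro ⟨a, ha, b, hb, rfl⟩
    exact ⟨a, ha, b₀ * b, Subgroup.mul_mem _ hb₀ hb, by simp [mul_assoc]⟩
  · rintro ⟨a, ha, b, hb, rfl⟩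
    exact ⟨a, ha, b₀⁻¹ * b, Subgroup.mul_mem _ (Subgroup.inv_mem _ hb₀) hb, by simp [mul_assoc]⟩

lemma exists_dblCoset_min_aux (X₁ X₂ : Set B) : ∀ n : ℕ, ∀ w : W, ℓ w ≤ n →
    ∃ d, IsBrMin cs
      (dblCoset (Subgroup.closure (cs.simple '' X₁)) (Subgroup.closure (cs.simple '' X₂)) w) d := by
  intro n
  induction n using Nat.strong_induction_on with
  | _ n ih =>
    intro w hw
    by_cases hL : ∃ i ∈ X₁, ℓ (σ i * w) < ℓ w
    · obtain ⟨i, hi, hlt⟩ := hL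
      obtain ⟨d, hd⟩ := ih (ℓ (σ i * w)) (by omega) (σ i * w) (le_refl _)
      refine ⟨d, ?_⟩
      rwa [dblCoset_eq_left (Subgroup.subset_closure (show σ i ∈ cs.simple '' X₁ from ⟨i, hi, rfl⟩)) w] at hd
    · by_cases hR : ∃ j ∈ X₂, ℓ (w * σ j) < ℓ w
      · obtain ⟨j, hj, hlt⟩ := hR
        obtain ⟨d, hd⟩ := ih (ℓ (w * σ j)) (by omega) (w * σ j) (le_refl _)
        refine ⟨d, ?_⟩
        rwa [dblCoset_eq_right (Subgroup.subset_closure (show σ j ∈ cs.simple '' X₂ from ⟨j, hj, rfl⟩)) w] at hd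
      · push_neg at hL hR
        refine ⟨w, dblCoset_self _ _ w, ?_⟩
        rintro z ⟨a, ha, b, hb, rfl⟩
        obtain ⟨ωa, hωa, rfl⟩ := mem_parabolic_word cs ha
        obtain ⟨ωb, hωb, rfl⟩ := mem_parabolic_word cs hb
        have hwR : ∀ j ∈ X₂, ℓ w < ℓ (w * σ j) := by
          intro j hj
          have h1 := hR j hj
          have := cs.length_mul_simple_ne w j
          omega
        have hwL : ∀ i ∈ X₁, ℓ w < ℓ (σ i * w) := by
          intro i hi
          have h1 := hL i hi
          have := cs.length_simple_mul_ne w i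
          omega
        have step1 : BruhatLE cs w (w * π ωb) :=
          le_parabolic_mul_right cs hwR ωb hωb w (le_refl' cs w)
        have step2 : BruhatLE cs w (π ωa * (w * π ωb)) :=
          le_parabolic_mul_left cs hwL ωa hωa _ step1
        rwa [← mul_assoc] at step2

lemma exists_dblCoset_min (X₁ X₂ : Set B) (w : W) :
    ∃ d, IsBrMin cs
      (dblCoset (Subgroup.closure (cs.simple '' X₁)) (Subgroup.closure (cs.simple '' X₂)) w) d :=
  exists_dblCoset_min_aux cs X₁ X₂ (ℓ w) w (le_refl _)

lemma dblmin_mono {X₁ X₂ : Set B} {x y dx dy : W}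
    (hx : IsBrMin cs
      (dblCoset (Subgroup.closure (cs.simple '' X₁)) (Subgroup.closure (cs.simple '' X₂)) x) dx)
    (hy : IsBrMin cs
      (dblCoset (Subgroup.closure (cs.simple '' X₁)) (Subgroup.closure (cs.simple '' X₂)) y) dy)
    (hxy : BruhatLE cs x y) : BruhatLE cs dx dy := by
  obtain ⟨a, ha, b, hb, hdyeq⟩ := hy.1
  obtain ⟨ωa, hωa, rfl⟩ := mem_parabolic_word cs ha
  obtain ⟨ωb, hωb, rfl⟩ := mem_parabolic_word cs hb
  obtain ⟨c₂, hc₂, h1⟩ := exists_parab_le_right cs ωb hωb x y hxy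
  obtain ⟨c₁, hc₁, h2⟩ := exists_parab_le_left cs ωa hωa (x * c₂) (y * π ωb) h1
  have hmem : c₁ * (x * c₂) ∈ dblCoset (Subgroup.closure (cs.simple '' X₁))
      (Subgroup.closure (cs.simple '' X₂)) x :=
    ⟨c₁, hc₁, c₂, hc₂, by rw [mul_assoc]⟩
  have h3 : BruhatLE cs dx (c₁ * (x * c₂)) := hx.2 _ hmem
  have h4 : π ωa * (y * π ωb) = dy := by rw [hdyeq, mul_assoc]
  rw [h4] at h2
  exact le_trans' cs h3 h2

/-! ### pairwise lower bounds in `I(u)·ψ` -/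

lemma le_one_eq {x : W} (h : BruhatLE cs x 1) : x = 1 := by
  have := le_length cs h
  rw [cs.length_one] at this
  rw [← cs.length_eq_zero_iff]
  omega

lemma Ppair_aux : ∀ n : ℕ, ∀ u ψ x₁ x₂ : W, ℓ u ≤ n →
    BruhatLE cs x₁ u → BruhatLE cs x₂ u →
    ∃ x, BruhatLE cs x u ∧ BruhatLE cs (x * ψ) (x₁ * ψ) ∧ BruhatLE cs (x * ψ) (x₂ * ψ) := by
  intro n
  induction n using Nat.strong_induction_on with
  | _ n ih =>
    intro u ψ x₁ x₂ hu h1 h2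
    by_cases hu1 : u = 1
    · subst hu1
      rw [le_one_eq cs h1, le_one_eq cs h2]
      exact ⟨1, le_refl' cs 1, le_refl' cs _, le_refl' cs _⟩
    · obtain ⟨i, hi⟩ := cs.exists_leftDescent_of_ne_one hu1
      have hi' : ℓ (σ i * u) < ℓ u := hi
      set v := σ i * u with hv_def
      have huv : u = σ i * v := by rw [hv_def, cs.simple_mul_simple_cancel_left]
      have hvup : ℓ v < ℓ (σ i * v) := by rw [← huv]; exact hi'
      -- normalize x₁ x₂
      have hnorm : ∀ x : W, BruhatLE cs x u → ∃ x', BruhatLE cs x' v ∧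
          (x * ψ = x' * ψ ∨ x * ψ = σ i * (x' * ψ)) := by
        intro x hx
        rw [huv] at hx
        rcases propZL cs hx hvup with hc | hc
        · exact ⟨x, hc, Or.inl rfl⟩
        · refine ⟨σ i * x, hc, Or.inr ?_⟩
          rw [← mul_assoc, cs.simple_mul_simple_cancel_left]
      obtain ⟨x₁', hx₁'le, hx₁'⟩ := hnorm x₁ h1
      obtain ⟨x₂', hx₂'le, hx₂'⟩ := hnorm x₂ h2
      obtain ⟨y, hyv, hy1, hy2⟩ := ih (ℓ v) (by omega) v ψ x₁' x₂' (le_refl _) hx₁'le hx₂'le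
      have hvu : BruhatLE cs v u := by
        rw [hv_def]; exact simple_mul_le cs hi'
      rcases Nat.lt_or_ge (ℓ (σ i * (y * ψ))) (ℓ (y * ψ)) with hdn | hup
      · -- use σ i * y
        have hxu : BruhatLE cs (σ i * y) u := by
          rw [huv]
          exact liftL cs hyv hvup
        refine ⟨σ i * y, hxu, ?_, ?_⟩
        all_goals {
          first
          | (rcases hx₁' with he | he
             · rw [he, mul_assoc]
               exact le_trans' cs (simple_mul_le cs (by rwa [← mul_assoc] at hdn ⊢)) hy1
             · rw [he, mul_assoc]
               rcases Nat.lt_or_ge (ℓ (σ i * (x₁' * ψ))) (ℓ (x₁' * ψ)) with hs | hs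
               · exact liftDDL cs hy1 hs (by rwa [← mul_assoc] at hdn ⊢)
               · have hs' : ℓ (x₁' * ψ) < ℓ (σ i * (x₁' * ψ)) := by
                   have := cs.length_simple_mul_ne (x₁' * ψ) i; omega
                 refine le_trans' cs (simple_mul_le cs (by rwa [← mul_assoc] at hdn ⊢)) ?_
                 exact le_trans' cs hy1 (le_simple_mul cs hs'))
          | (rcases hx₂' with he | he
             · rw [he, mul_assoc]
               exact le_trans' cs (simple_mul_le cs (by rwa [← mul_assoc] at hdn ⊢)) hy2
             · rw [he, mul_assoc]
               rcases Nat.lt_or_ge (ℓ (σ i * (x₂' * ψ))) (ℓ (x₂' * ψ)) with hs | hs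
               · exact liftDDL cs hy2 hs (by rwa [← mul_assoc] at hdn ⊢)
               · have hs' : ℓ (x₂' * ψ) < ℓ (σ i * (x₂' * ψ)) := by
                   have := cs.length_simple_mul_ne (x₂' * ψ) i; omega
                 refine le_trans' cs (simple_mul_le cs (by rwa [← mul_assoc] at hdn ⊢)) ?_
                 exact le_trans' cs hy2 (le_simple_mul cs hs'))
        }
      · -- use y
        have hup' : ℓ (y * ψ) < ℓ (σ i * (y * ψ)) := by
          have := cs.length_simple_mul_ne (y * ψ) i; omega
        refine ⟨y, le_trans' cs hyv hvu, ?_, ?_⟩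
        · rcases hx₁' with he | he
          · rw [he]; exact hy1
          · rw [he]
            rcases Nat.lt_or_ge (ℓ (σ i * (x₁' * ψ))) (ℓ (x₁' * ψ)) with hs | hs
            · exact liftDUL cs hy1 hs hup'
            · have hs' : ℓ (x₁' * ψ) < ℓ (σ i * (x₁' * ψ)) := by
                have := cs.length_simple_mul_ne (x₁' * ψ) i; omega
              exact le_trans' cs hy1 (le_simple_mul cs hs')
        · rcases hx₂' with he | he
          · rw [he]; exact hy2
          · rw [he]
            rcases Nat.lt_or_ge (ℓ (σ i * (x₂' * ψ))) (ℓ (x₂' * ψ)) with hs | hs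
            · exact liftDUL cs hy2 hs hup'
            · have hs' : ℓ (x₂' * ψ) < ℓ (σ i * (x₂' * ψ)) := by
                have := cs.length_simple_mul_ne (x₂' * ψ) i; omega
              exact le_trans' cs hy2 (le_simple_mul cs hs')

end BrAux
end

section
set_option linter.unusedSectionVars false
set_option maxHeartbeats 1000000
variable {B W : Type*} [Group W] {M : CoxeterMatrix B}
namespace BrAux
open CoxeterSystem List
variable (cs : CoxeterSystem M W)
local prefix:100 "σ" => cs.simple
local prefix:100 "π" => cs.wordProd
local prefix:100 "ℓ" => cs.length

/-! ### minimum of the set `W₁ · I(τ⁻¹) · ψ · W₂` -/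

lemma KK_nonempty (W₁ W₂ : Subgroup W) (τ ψ : W) : ψ ∈ KKset cs W₁ W₂ τ ψ :=
  ⟨1, Subgroup.one_mem _, 1, one_le cs τ⁻¹, 1, Subgroup.one_mem _, by simp⟩

lemma min_of_pairwise {K : Set W}
    (hpair : ∀ z₁ ∈ K, ∀ z₂ ∈ K, ∃ z ∈ K, BruhatLE cs z z₁ ∧ BruhatLE cs z z₂) :
    ∀ n : ℕ, ∀ z ∈ K, ℓ z ≤ n → ∃ m, IsBrMin cs K m := by
  intro n
  induction n using Nat.strong_induction_on with
  | _ n ih =>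
    intro z hz hzn
    by_cases hall : ∀ y ∈ K, BruhatLE cs z y
    · exact ⟨z, hz, hall⟩
    · push_neg at hall
      obtain ⟨y, hy, hnle⟩ := hall
      obtain ⟨w, hw, hwz, hwy⟩ := hpair z hz y hy
      have hne : w ≠ z := by
        rintro rfl
        exact hnle hwy
      have hlt : ℓ w < ℓ z := by
        have h1 := le_length cs hwz
        rcases Nat.lt_or_ge (ℓ w) (ℓ z) with h | h
        · exact h
        · exact absurd (le_eq_of_length_ge cs hwz h) hne
      exact ih (ℓ w) (by omega) w hw (le_refl _)

lemma exists_KK_min (X₁ X₂ : Set B) (τ ψ : W) :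
    ∃ m, IsBrMin cs (KKset cs (Subgroup.closure (cs.simple '' X₁))
      (Subgroup.closure (cs.simple '' X₂)) τ ψ) m := by
  set W₁ := Subgroup.closure (cs.simple '' X₁)
  set W₂ := Subgroup.closure (cs.simple '' X₂)
  have hpair : ∀ z₁ ∈ KKset cs W₁ W₂ τ ψ, ∀ z₂ ∈ KKset cs W₁ W₂ τ ψ,
      ∃ z ∈ KKset cs W₁ W₂ τ ψ, BruhatLE cs z z₁ ∧ BruhatLE cs z z₂ := by
    rintro z₁ ⟨a₁, ha₁, x₁, hx₁, b₁, hb₁, rfl⟩ z₂ ⟨a₂, ha₂, x₂, hx₂, b₂, hb₂, rfl⟩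
    obtain ⟨d₁, hd₁⟩ := exists_dblCoset_min cs X₁ X₂ (x₁ * ψ)
    obtain ⟨d₂, hd₂⟩ := exists_dblCoset_min cs X₁ X₂ (x₂ * ψ)
    have hz₁mem : a₁ * x₁ * ψ * b₁ ∈ dblCoset W₁ W₂ (x₁ * ψ) :=
      ⟨a₁, ha₁, b₁, hb₁, by simp [mul_assoc]⟩
    have hz₂mem : a₂ * x₂ * ψ * b₂ ∈ dblCoset W₁ W₂ (x₂ * ψ) :=
      ⟨a₂, ha₂, b₂, hb₂, by simp [mul_assoc]⟩
    have hle₁ : BruhatLE cs d₁ (a₁ * x₁ * ψ * b₁) := hd₁.2 _ hz₁mem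
    have hle₂ : BruhatLE cs d₂ (a₂ * x₂ * ψ * b₂) := hd₂.2 _ hz₂mem
    obtain ⟨x, hxτ, hxle₁, hxle₂⟩ := Ppair_aux cs (ℓ τ⁻¹) τ⁻¹ ψ x₁ x₂ (le_refl _) hx₁ hx₂
    obtain ⟨e, he⟩ := exists_dblCoset_min cs X₁ X₂ (x * ψ)
    have hemem : e ∈ KKset cs W₁ W₂ τ ψ := by
      obtain ⟨a, ha, b, hb, heq⟩ := he.1
      exact ⟨a, ha, x, hxτ, b, hb, by rw [heq]; simp [mul_assoc]⟩
    refine ⟨e, hemem, ?_, ?_⟩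
    · exact le_trans' cs (dblmin_mono cs he hd₁ hxle₁) hle₁
    · exact le_trans' cs (dblmin_mono cs he hd₂ hxle₂) hle₂
  exact min_of_pairwise cs hpair (ℓ ψ) ψ (KK_nonempty cs W₁ W₂ τ ψ) (le_refl _)

/-! ### the key combinatorial claim (uses the hypothesis on `brmin`s) -/

lemma starR (W₁ : Subgroup W) (X₁ : Set B) (hW₁ : W₁ = Subgroup.closure (cs.simple '' X₁))
    (τ : W) (i : B) (m₁ m₂ : W)
    (hm₁ : IsBrMin cs (lCoset W₁ (σ i * τ)) m₁)
    (hm₂ : IsBrMin cs (lCoset W₁ τ) m₂)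
    (h12 : BruhatLE cs m₁ m₂) :
    ∀ g, BruhatLE cs g τ → ∃ h c, BruhatLE cs h τ ∧ c ∈ W₁ ∧ σ i * g = h * c := by
  have hτmem : τ ∈ lCoset W₁ τ := ⟨1, Subgroup.one_mem _, (mul_one τ).symm⟩
  have hm₂τ : BruhatLE cs m₂ τ := hm₂.2 τ hτmem
  by_cases hA : τ⁻¹ * σ i * τ ∈ W₁
  · by_cases hst : ℓ (σ i * τ) < ℓ τ
    · intro g hg
      rcases Nat.lt_or_ge (ℓ (σ i * g)) (ℓ g) with hdn | hup
      · exact ⟨σ i * g, 1, le_trans' cs (simple_mul_le cs hdn) hg, Subgroup.one_mem _,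
          (mul_one _).symm⟩
      · have hup' : ℓ g < ℓ (σ i * g) := by
          have := cs.length_simple_mul_ne g i; omega
        exact ⟨σ i * g, 1, liftNL cs hg hst hup', Subgroup.one_mem _, (mul_one _).symm⟩
    · have hst' : ℓ τ < ℓ (σ i * τ) := by
        have := cs.length_simple_mul_ne τ i; omega
      intro g hg
      rcases Nat.lt_or_ge (ℓ (σ i * g)) (ℓ g) with hdn | hup
      · exact ⟨σ i * g, 1, le_trans' cs (simple_mul_le cs hdn) hg, Subgroup.one_mem _,
          (mul_one _).symm⟩
      · have hup' : ℓ g < ℓ (σ i * g) := by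
          have := cs.length_simple_mul_ne g i; omega
        have h1 : BruhatLE cs (σ i * g) (σ i * τ) := liftL cs hg hst'
        have h2 : σ i * τ = τ * (τ⁻¹ * σ i * τ) := by
          simp [mul_assoc]
        rw [hW₁] at hA
        obtain ⟨ωc, hωc, hπωc⟩ := mem_parabolic_word cs hA
        rw [h2, ← hπωc] at h1
        obtain ⟨h, c, hhτ, hcW, heq⟩ := interval_mul_parabolic cs ωc hωc τ (σ i * g) h1
        exact ⟨h, c, hhτ, hW₁ ▸ hcW, heq⟩
  · -- then necessarily σ i * m₂ < m₂
    obtain ⟨b₀, hb₀, hm₂eq⟩ := hm₂.1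
    obtain ⟨b₁, hb₁, hm₁eq⟩ := hm₁.1
    have hm : ℓ (σ i * m₂) < ℓ m₂ := by
      by_contra hcon
      have hup : ℓ m₂ < ℓ (σ i * m₂) := by
        have := cs.length_simple_mul_ne m₂ i; omega
      have hσm₂mem : σ i * m₂ ∈ lCoset W₁ (σ i * τ) :=
        ⟨b₀, hb₀, by rw [hm₂eq, mul_assoc]⟩
      have hσm₁mem : σ i * m₁ ∈ lCoset W₁ τ :=
        ⟨b₁, hb₁, by rw [hm₁eq, ← mul_assoc, cs.simple_mul_simple_cancel_left]⟩
      have h1 : BruhatLE cs m₁ (σ i * m₂) := hm₁.2 _ hσm₂mem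
      have h2 : BruhatLE cs m₂ (σ i * m₁) := hm₂.2 _ hσm₁mem
      have hne : m₁ ≠ m₂ := by
        rintro rfl
        apply hA
        have : σ i * τ * b₁ = τ * b₀ := by rw [← hm₁eq, ← hm₂eq]
        have h3 : τ⁻¹ * σ i * τ = b₀ * b₁⁻¹ := by
          have h := congrArg (fun z => τ⁻¹ * z * b₁⁻¹) this
          simpa [mul_assoc] using h
        rw [h3]
        exact Subgroup.mul_mem _ hb₀ (Subgroup.inv_mem _ hb₁)
      have hlt : ℓ m₁ < ℓ m₂ := by
        have hle := le_length cs h12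
        rcases Nat.lt_or_ge (ℓ m₁) (ℓ m₂) with h | h
        · exact h
        · exact absurd (le_eq_of_length_ge cs h12 h) hne
      have hsm₁ : ℓ (σ i * m₁) ≤ ℓ m₁ + 1 := by
        have := cs.length_simple_mul m₁ i; omega
      have h4 : ℓ (σ i * m₁) ≤ ℓ m₂ := by omega
      have h5 : m₂ = σ i * m₁ := le_eq_of_length_ge cs h2 h4
      have h6 : m₁ = σ i * m₂ := by rw [h5, cs.simple_mul_simple_cancel_left]
      rw [← h6] at hup
      omega
    -- scenario B
    intro g hg
    have hτeq : τ = m₂ * b₀⁻¹ := by rw [hm₂eq, mul_assoc, mul_inv_cancel, mul_one]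
    rw [hW₁] at hb₀
    obtain ⟨ωc, hωc, hπωc⟩ := mem_parabolic_word cs (Subgroup.inv_mem _ hb₀)
    have hg2 : BruhatLE cs g (m₂ * π ωc) := by rwa [hπωc, ← hτeq]
    obtain ⟨h₀, c₀, hh₀, hc₀, hgeq⟩ := interval_mul_parabolic cs ωc hωc m₂ g hg2
    rcases Nat.lt_or_ge (ℓ (σ i * h₀)) (ℓ h₀) with hdn | hup
    · refine ⟨σ i * h₀, c₀, ?_, hW₁ ▸ hc₀, by rw [hgeq, mul_assoc]⟩
      exact le_trans' cs (simple_mul_le cs hdn) (le_trans' cs hh₀ hm₂τ)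
    · have hup' : ℓ h₀ < ℓ (σ i * h₀) := by
        have := cs.length_simple_mul_ne h₀ i; omega
      refine ⟨σ i * h₀, c₀, ?_, hW₁ ▸ hc₀, by rw [hgeq, mul_assoc]⟩
      exact le_trans' cs (liftNL cs hh₀ hm hup') hm₂τ

/-- left-sided version: `x·σᵢ ∈ W₁ · I(τ⁻¹)` for `x ≤ τ⁻¹`. -/
lemma starL (W₁ : Subgroup W) (X₁ : Set B) (hW₁ : W₁ = Subgroup.closure (cs.simple '' X₁))
    (τ : W) (i : B) (m₁ m₂ : W)
    (hm₁ : IsBrMin cs (lCoset W₁ (σ i * τ)) m₁)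
    (hm₂ : IsBrMin cs (lCoset W₁ τ) m₂)
    (h12 : BruhatLE cs m₁ m₂) :
    ∀ x, BruhatLE cs x τ⁻¹ → ∃ a y, a ∈ W₁ ∧ BruhatLE cs y τ⁻¹ ∧ x * σ i = a * y := by
  intro x hx
  have hg : BruhatLE cs x⁻¹ τ := by
    have h := (le_inv_iff cs).mpr hx
    rwa [inv_inv] at h
  obtain ⟨h, c, hhτ, hcW, heq⟩ := starR cs W₁ X₁ hW₁ τ i m₁ m₂ hm₁ hm₂ h12 x⁻¹ hg
  refine ⟨c⁻¹, h⁻¹, Subgroup.inv_mem _ hcW, ?_, ?_⟩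
  · exact (le_inv_iff cs).mpr hhτ
  · have := congrArg (·⁻¹) heq
    simp only [mul_inv_rev, cs.inv_simple, inv_inv] at this
    exact this

end BrAux
end

open BrAux in
/-- Let `τ, φ ∈ W`, `W₁, W₂` standard parabolic subgroups, and `s` a simple reflection
such that `sφ < φ` in the Bruhat order and `brmin(sτW₁) ≤ brmin(τW₁)`.  Then the unique
minimal element of `W₁ I(τ⁻¹) φ W₂` equals the unique minimal element of
`W₁ I(τ⁻¹) sφ W₂` (both exist). -/
theorem stmt_17 (cs : CoxeterSystem M W) (W₁ W₂ : Subgroup W)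
    (h₁ : IsStdParabolic cs W₁) (h₂ : IsStdParabolic cs W₂) (τ φ : W) (i : B)
    (hφ : BruhatLT cs (cs.simple i * φ) φ)
    (hτ : ∃ m₁ m₂ : W,
      IsBrMin cs (lCoset W₁ (cs.simple i * τ)) m₁ ∧
      IsBrMin cs (lCoset W₁ τ) m₂ ∧ BruhatLE cs m₁ m₂) :
    ∃ m : W,
      IsBrMin cs (KKset cs W₁ W₂ τ φ) m ∧
      IsBrMin cs (KKset cs W₁ W₂ τ (cs.simple i * φ)) m := by
  obtain ⟨X₁, rfl⟩ := h₁
  obtain ⟨X₂, rfl⟩ := h₂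
  obtain ⟨m₁, m₂, hm₁, hm₂, h12⟩ := hτ
  have hstar := starL cs _ X₁ rfl τ i m₁ m₂ hm₁ hm₂ h12
  have hKeq : KKset cs (Subgroup.closure (cs.simple '' X₁)) (Subgroup.closure (cs.simple '' X₂)) τ φ
      = KKset cs (Subgroup.closure (cs.simple '' X₁)) (Subgroup.closure (cs.simple '' X₂)) τ
        (cs.simple i * φ) := by
    ext z
    constructor
    · rintro ⟨a, ha, x, hx, b, hb, rfl⟩
      obtain ⟨a', y, ha', hy, hxy⟩ := hstar x hx
      have hx2 : x = a' * y * cs.simple i := by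
        rw [← hxy, cs.simple_mul_simple_cancel_right]
      refine ⟨a * a', Subgroup.mul_mem _ ha ha', y, hy, b, hb, ?_⟩
      rw [hx2]
      simp only [mul_assoc, cs.simple_mul_simple_cancel_left]
    · rintro ⟨a, ha, x, hx, b, hb, rfl⟩
      obtain ⟨a', y, ha', hy, hxy⟩ := hstar x hx
      have hx2 : x = a' * y * cs.simple i := by
        rw [← hxy, cs.simple_mul_simple_cancel_right]
      refine ⟨a * a', Subgroup.mul_mem _ ha ha', y, hy, b, hb, ?_⟩
      rw [hx2]
      simp only [mul_assoc, cs.simple_mul_simple_cancel_left]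
  obtain ⟨m, hm⟩ := exists_KK_min cs X₁ X₂ τ φ
  refine ⟨m, hm, ?_⟩
  rwa [← hKeq]
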